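/- Fix ε ∈ (0, 1.88) and let p = (1+ε)/n. Then with high probability (probability tending to 1 as n → ∞), every subgraph of the random graph G(n,p) has average degree at most 6; equivalently, every nonempty vertex subset S satisfies |E(G[S])| ≤ 3|S|. -/

import Mathlib

-- shared ER preamble for stmts 8, 9, 13, 14

open MeasureTheory Filter

/-- Graph built from edge indicator flags on non-diagonal unordered pairs. -/
def graphOfFlags {n : ℕ} (χ : {e : Sym2 (Fin n) // ¬ e.IsDiag} → Bool) : SimpleGraph (Fin n) where
  Adj i j := i ≠ j ∧ ∀ h : ¬ (s(i, j) : Sym2 (Fin n)).IsDiag, χ ⟨s(i, j), h⟩ = true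
  symm := by
    constructor
    intro i j ⟨hne, h⟩
    refine ⟨hne.symm, fun hd => ?_⟩
    have he : (s(j, i) : Sym2 (Fin n)) = s(i, j) := Sym2.eq_swap
    rw [show (⟨s(j, i), hd⟩ : {e : Sym2 (Fin n) // ¬ e.IsDiag}) =
        ⟨s(i, j), he ▸ hd⟩ from Subtype.ext he]
    exact h _
  loopless := ⟨fun i h => h.1 rfl⟩

noncomputable instance (n : ℕ) : MeasurableSpace (SimpleGraph (Fin n)) := ⊤

/-- The Erdős–Rényi random graph measure on `SimpleGraph (Fin n)`. -/
noncomputable def erdosRenyi (n : ℕ) (p : ℝ) : Measure (SimpleGraph (Fin n)) :=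
  Measure.map graphOfFlags
    (Measure.pi fun _ : {e : Sym2 (Fin n) // ¬ e.IsDiag} =>
      (PMF.bernoulli (min (Real.toNNReal p) 1) (min_le_right _ _)).toMeasure)

set_option maxHeartbeats 1600000
set_option linter.unusedSectionVars false
set_option linter.unusedVariables false
open scoped ENNReal

namespace ER13

variable {ι : Type*} [Fintype ι] [DecidableEq ι]

noncomputable def bern (q : ℝ≥0∞) (hq : q ≤ 1) : Measure Bool :=
  (PMF.bernoulli q.toNNReal (show q.toNNReal ≤ 1 by
    have h := ENNReal.toNNReal_mono ENNReal.one_ne_top hq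
    rwa [ENNReal.toNNReal_one] at h)).toMeasure

instance (q : ℝ≥0∞) (hq : q ≤ 1) : IsProbabilityMeasure (bern q hq) :=
  PMF.toMeasure.isProbabilityMeasure _

lemma bern_singleton (q : ℝ≥0∞) (hq : q ≤ 1) (b : Bool) :
    bern q hq {b} = bif b then q else 1 - q := by
  rw [bern, PMF.toMeasure_apply_singleton _ _ (measurableSet_singleton _), PMF.bernoulli_apply]
  have hne : q ≠ ⊤ := (lt_of_le_of_lt hq ENNReal.one_lt_top).ne
  cases b <;> simp [ENNReal.coe_sub, ENNReal.coe_toNNReal hne]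

lemma measurableSet_all (s : Set (ι → Bool)) : MeasurableSet s :=
  (Set.toFinite s).measurableSet

noncomputable def cube (ι : Type*) [Fintype ι] (q : ℝ≥0∞) (hq : q ≤ 1) :
    Measure (ι → Bool) := Measure.pi fun _ : ι => bern q hq

instance (q : ℝ≥0∞) (hq : q ≤ 1) : IsProbabilityMeasure (cube ι q hq) := by
  unfold cube; infer_instance

lemma cube_cyl (q : ℝ≥0∞) (hq : q ≤ 1) (A : Finset ι) (f : ι → Bool) :
    cube ι q hq {χ : ι → Bool | ∀ e ∈ A, χ e = f e} = ∏ e ∈ A, bern q hq {f e} := by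
  have hset : {χ : ι → Bool | ∀ e ∈ A, χ e = f e} =
      Set.pi Set.univ (fun e => if e ∈ A then ({f e} : Set Bool) else Set.univ) := by
    ext χ
    simp only [Set.mem_setOf_eq, Set.mem_pi, Set.mem_univ, forall_true_left]
    constructor
    · intro h e
      by_cases he : e ∈ A
      · simp [he, h e he]
      · simp [he]
    · intro h e he
      have := h e
      rw [if_pos he] at this
      simpa using this
  rw [hset, cube, Measure.pi_pi]
  have : ∀ e : ι, bern q hq (if e ∈ A then ({f e} : Set Bool) else Set.univ)
      = if e ∈ A then bern q hq {f e} else 1 := by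
    intro e; split_ifs
    · rfl
    · exact measure_univ
  rw [Finset.prod_congr rfl fun e _ => this e, Finset.prod_ite_mem, Finset.univ_inter]

lemma cube_pattern (q : ℝ≥0∞) (hq : q ≤ 1) (A B : Finset ι) (hBA : B ⊆ A) :
    cube ι q hq {χ : ι → Bool | ∀ e ∈ A, χ e = decide (e ∈ B)}
      = q ^ B.card * (1 - q) ^ (A.card - B.card) := by
  rw [cube_cyl]
  rw [← Finset.union_sdiff_of_subset hBA, Finset.prod_union Finset.disjoint_sdiff]
  have h1 : ∀ e ∈ B, bern q hq {decide (e ∈ B)} = q := by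
    intro e he; rw [decide_eq_true he, bern_singleton]; rfl
  have h2 : ∀ e ∈ A \ B, bern q hq {decide (e ∈ B)} = 1 - q := by
    intro e he
    rw [Finset.mem_sdiff] at he
    rw [decide_eq_false he.2, bern_singleton]; rfl
  rw [Finset.prod_congr rfl h1, Finset.prod_congr rfl h2, Finset.prod_const, Finset.prod_const,
    Finset.card_sdiff_of_subset hBA, Finset.union_sdiff_of_subset hBA]

lemma cube_count_ge_le_sum (q : ℝ≥0∞) (hq : q ≤ 1) (A : Finset ι) (k : ℕ) :
    cube ι q hq {χ : ι → Bool | k ≤ (A.filter fun e => χ e = true).card}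
      ≤ ∑ B ∈ A.powerset.filter (fun B => k ≤ B.card),
          q ^ B.card * (1 - q) ^ (A.card - B.card) := by
  have hsub : {χ : ι → Bool | k ≤ (A.filter fun e => χ e = true).card} ⊆
      ⋃ B ∈ A.powerset.filter (fun B => k ≤ B.card),
        {χ : ι → Bool | ∀ e ∈ A, χ e = decide (e ∈ B)} := by
    intro χ hχ
    simp only [Set.mem_setOf_eq] at hχ
    have h1 : (A.filter fun e => χ e = true) ∈ A.powerset.filter (fun B => k ≤ B.card) :=
      Finset.mem_filter.mpr ⟨Finset.mem_powerset.mpr (Finset.filter_subset _ _), hχ⟩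
    have h2 : χ ∈ {χ' : ι → Bool |
        ∀ e ∈ A, χ' e = decide (e ∈ (A.filter fun e => χ e = true))} := by
      intro e he
      by_cases h : χ e = true
      · simp [Finset.mem_filter, he, h]
      · simp only [Bool.not_eq_true] at h
        simp [Finset.mem_filter, he, h]
    exact Set.mem_biUnion h1 h2
  calc cube ι q hq _ ≤ _ := measure_mono hsub
    _ ≤ ∑ B ∈ A.powerset.filter (fun B => k ≤ B.card),
          cube ι q hq {χ : ι → Bool | ∀ e ∈ A, χ e = decide (e ∈ B)} :=
      measure_biUnion_finset_le _ _
    _ = _ := by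
      refine Finset.sum_congr rfl fun B hB => ?_
      rw [Finset.mem_filter, Finset.mem_powerset] at hB
      exact cube_pattern q hq A B hB.1

lemma cube_count_ge_le_choose (q : ℝ≥0∞) (hq : q ≤ 1) (A : Finset ι) (k : ℕ) :
    cube ι q hq {χ : ι → Bool | k ≤ (A.filter fun e => χ e = true).card}
      ≤ (A.card.choose k) * q ^ k := by
  have hsub : {χ : ι → Bool | k ≤ (A.filter fun e => χ e = true).card} ⊆
      ⋃ B ∈ A.powersetCard k, {χ : ι → Bool | ∀ e ∈ B, χ e = true} := by
    intro χ hχ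
    simp only [Set.mem_setOf_eq] at hχ
    obtain ⟨B, hB, hcard⟩ := Finset.exists_subset_card_eq hχ
    have h1 : B ∈ A.powersetCard k :=
      Finset.mem_powersetCard.mpr ⟨hB.trans (Finset.filter_subset _ _), hcard⟩
    have h2 : χ ∈ {χ' : ι → Bool | ∀ e ∈ B, χ' e = true} :=
      fun e he => (Finset.mem_filter.mp (hB he)).2
    exact Set.mem_biUnion h1 h2
  calc cube ι q hq _ ≤ _ := measure_mono hsub
    _ ≤ ∑ B ∈ A.powersetCard k, cube ι q hq {χ : ι → Bool | ∀ e ∈ B, χ e = true} :=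
      measure_biUnion_finset_le _ _
    _ = ∑ _B ∈ A.powersetCard k, q ^ k := by
      refine Finset.sum_congr rfl fun B hB => ?_
      rw [cube_cyl q hq B (fun _ => true)]
      have : ∀ e ∈ B, bern q hq {(fun _ => true) e} = q := by
        intro e _; rw [bern_singleton]; rfl
      rw [Finset.prod_congr rfl this, Finset.prod_const,
        (Finset.mem_powersetCard.mp hB).2]
    _ = _ := by rw [Finset.sum_const, Finset.card_powersetCard, nsmul_eq_mul]

lemma tail_sum_le (A : Finset ι) (k : ℕ) (x t : ℝ) (hx0 : 0 ≤ x) (hx1 : x ≤ 1) (ht : 0 ≤ t) :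
    ∑ B ∈ A.powerset.filter (fun B => k ≤ B.card), x ^ B.card * (1 - x) ^ (A.card - B.card)
      ≤ Real.exp (-(t * k) + x * A.card * (Real.exp t - 1)) := by
  have hterm : ∀ B ∈ A.powerset.filter (fun B => k ≤ B.card),
      x ^ B.card * (1 - x) ^ (A.card - B.card)
        ≤ Real.exp (-(t * k)) * ((x * Real.exp t) ^ B.card * (1 - x) ^ (A.card - B.card)) := by
    intro B hB
    rw [Finset.mem_filter] at hB
    have hkb : (k : ℝ) ≤ B.card := Nat.cast_le.mpr hB.2
    have h1 : (1 : ℝ) ≤ Real.exp (-(t * k)) * (Real.exp t) ^ B.card := by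
      rw [← Real.exp_nat_mul, ← Real.exp_add]
      rw [show (1:ℝ) = Real.exp 0 by simp]
      apply Real.exp_le_exp.mpr
      nlinarith [mul_le_mul_of_nonneg_left hkb ht]
    have hx1' : (0:ℝ) ≤ 1 - x := by linarith
    have hx' : 0 ≤ x ^ B.card * (1 - x) ^ (A.card - B.card) := by positivity
    calc x ^ B.card * (1 - x) ^ (A.card - B.card)
        = 1 * (x ^ B.card * (1 - x) ^ (A.card - B.card)) := by ring
      _ ≤ (Real.exp (-(t * k)) * (Real.exp t) ^ B.card) *
            (x ^ B.card * (1 - x) ^ (A.card - B.card)) := by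
          exact mul_le_mul_of_nonneg_right h1 hx'
      _ = Real.exp (-(t * k)) * ((x * Real.exp t) ^ B.card * (1 - x) ^ (A.card - B.card)) := by
          rw [mul_pow]; ring
  calc ∑ B ∈ A.powerset.filter (fun B => k ≤ B.card), x ^ B.card * (1 - x) ^ (A.card - B.card)
      ≤ ∑ B ∈ A.powerset.filter (fun B => k ≤ B.card),
          Real.exp (-(t * k)) * ((x * Real.exp t) ^ B.card * (1 - x) ^ (A.card - B.card)) :=
        Finset.sum_le_sum hterm
    _ ≤ ∑ B ∈ A.powerset,
          Real.exp (-(t * k)) * ((x * Real.exp t) ^ B.card * (1 - x) ^ (A.card - B.card)) := by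
        apply Finset.sum_le_sum_of_subset_of_nonneg (Finset.filter_subset _ _)
        intro B hB _
        have hxe : (0:ℝ) ≤ x * Real.exp t := by positivity
        have hx1' : (0:ℝ) ≤ 1 - x := by linarith
        positivity
    _ = Real.exp (-(t * k)) * ∑ B ∈ A.powerset,
          (x * Real.exp t) ^ B.card * (1 - x) ^ (A.card - B.card) := by
        rw [Finset.mul_sum]
    _ = Real.exp (-(t * k)) * (x * Real.exp t + (1 - x)) ^ A.card := by
        congr 1
        have hprod : (x * Real.exp t + (1 - x)) ^ A.card
            = ∏ _e ∈ A, (x * Real.exp t + (1 - x)) := by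
          rw [Finset.prod_const]
        rw [hprod, Finset.prod_add]
        exact Finset.sum_congr rfl fun B hB => by
          rw [Finset.prod_const, Finset.prod_const,
            Finset.card_sdiff_of_subset (Finset.mem_powerset.mp hB)]
    _ ≤ Real.exp (-(t * k)) * Real.exp (x * (Real.exp t - 1)) ^ A.card := by
        apply mul_le_mul_of_nonneg_left _ (Real.exp_nonneg _)
        apply pow_le_pow_left₀ (by nlinarith [Real.exp_pos t])
        have := Real.add_one_le_exp (x * (Real.exp t - 1))
        nlinarith
    _ = Real.exp (-(t * k) + x * A.card * (Real.exp t - 1)) := by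
        rw [← Real.exp_nat_mul, ← Real.exp_add]
        ring_nf

lemma q_ne_top {q : ℝ≥0∞} (hq : q ≤ 1) : q ≠ ⊤ := (lt_of_le_of_lt hq ENNReal.one_lt_top).ne

lemma toReal_le_one {q : ℝ≥0∞} (hq : q ≤ 1) : q.toReal ≤ 1 := by
  simpa using ENNReal.toReal_mono (by simp) hq

lemma one_sub_eq_ofReal {q : ℝ≥0∞} (hq : q ≤ 1) :
    (1 : ℝ≥0∞) - q = ENNReal.ofReal (1 - q.toReal) := by
  rw [ENNReal.ofReal_sub _ ENNReal.toReal_nonneg, ENNReal.ofReal_one,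
    ENNReal.ofReal_toReal (q_ne_top hq)]

lemma cube_count_ge_le_exp (q : ℝ≥0∞) (hq : q ≤ 1) (A : Finset ι) (k : ℕ) (t : ℝ) (ht : 0 ≤ t) :
    cube ι q hq {χ : ι → Bool | k ≤ (A.filter fun e => χ e = true).card}
      ≤ ENNReal.ofReal (Real.exp (-(t * k) + q.toReal * A.card * (Real.exp t - 1))) := by
  set x : ℝ := q.toReal with hx
  have hx0 : 0 ≤ x := ENNReal.toReal_nonneg
  have hx1 : x ≤ 1 := toReal_le_one hq
  calc cube ι q hq _ ≤ _ := cube_count_ge_le_sum q hq A k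
    _ = ∑ B ∈ A.powerset.filter (fun B => k ≤ B.card),
          ENNReal.ofReal (x ^ B.card * (1 - x) ^ (A.card - B.card)) := by
        refine Finset.sum_congr rfl fun B _ => ?_
        rw [ENNReal.ofReal_mul (by positivity), ENNReal.ofReal_pow hx0,
          ENNReal.ofReal_pow (by linarith), ENNReal.ofReal_toReal (q_ne_top hq),
          ← one_sub_eq_ofReal hq]
    _ = ENNReal.ofReal (∑ B ∈ A.powerset.filter (fun B => k ≤ B.card),
          x ^ B.card * (1 - x) ^ (A.card - B.card)) := by
        rw [ENNReal.ofReal_sum_of_nonneg]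
        intro B _
        have : (0:ℝ) ≤ 1 - x := by linarith
        positivity
    _ ≤ _ := ENNReal.ofReal_le_ofReal (tail_sum_le A k x t hx0 hx1 ht)

lemma cube_count_ge_le_choose' (q : ℝ≥0∞) (hq : q ≤ 1) (A : Finset ι) (k : ℕ) :
    cube ι q hq {χ : ι → Bool | k ≤ (A.filter fun e => χ e = true).card}
      ≤ ENNReal.ofReal ((A.card.choose k : ℝ) * q.toReal ^ k) := by
  calc cube ι q hq _ ≤ _ := cube_count_ge_le_choose q hq A k
    _ = ENNReal.ofReal ((A.card.choose k : ℝ) * q.toReal ^ k) := by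
        rw [ENNReal.ofReal_mul (by positivity), ENNReal.ofReal_pow ENNReal.toReal_nonneg,
          ENNReal.ofReal_natCast, ENNReal.ofReal_toReal (q_ne_top hq)]

abbrev Flag (n : ℕ) := {e : Sym2 (Fin n) // ¬ e.IsDiag}

variable {n : ℕ}

/-- The non-diagonal pairs with both endpoints in `S`. -/
def pairs (S : Finset (Fin n)) : Finset (Flag n) :=
  Finset.univ.filter (fun e => ∀ v ∈ e.val, v ∈ S)

lemma pairs_card (S : Finset (Fin n)) :
    ((pairs S).card : ℝ) ≤ ((S.card : ℝ) ^ 2 - S.card) / 2 := by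
  classical
  have himg1 : (pairs S).image Subtype.val ⊆ S.sym2 := by
    intro z hz
    rw [Finset.mem_image] at hz
    obtain ⟨e, he, rfl⟩ := hz
    rw [Finset.mem_sym2_iff]
    exact fun a ha => (Finset.mem_filter.mp he).2 a ha
  have himg2 : S.image Sym2.diag ⊆ S.sym2 := by
    intro z hz
    rw [Finset.mem_image] at hz
    obtain ⟨x, hx, rfl⟩ := hz
    rw [Sym2.diag, Finset.mk_mem_sym2_iff]
    exact ⟨hx, hx⟩
  have hdisj : Disjoint ((pairs S).image Subtype.val) (S.image Sym2.diag) := by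
    rw [Finset.disjoint_left]
    intro z hz1 hz2
    rw [Finset.mem_image] at hz1 hz2
    obtain ⟨e, _, rfl⟩ := hz1
    obtain ⟨x, _, hx⟩ := hz2
    exact e.2 (hx ▸ Sym2.diag_isDiag x)
  have hcard : (pairs S).card + S.card ≤ S.sym2.card := by
    have h1 : ((pairs S).image Subtype.val).card = (pairs S).card :=
      Finset.card_image_of_injective _ Subtype.val_injective
    have h2 : (S.image Sym2.diag).card = S.card :=
      Finset.card_image_of_injective _ Sym2.diag_injective
    calc (pairs S).card + S.card
        = (((pairs S).image Subtype.val) ∪ (S.image Sym2.diag)).card := by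
          rw [Finset.card_union_of_disjoint hdisj, h1, h2]
      _ ≤ S.sym2.card := Finset.card_le_card (Finset.union_subset himg1 himg2)
  have hsym2 : 2 * S.sym2.card = S.card * (S.card + 1) := by
    rw [Finset.card_sym2, Nat.choose_two_right, Nat.add_sub_cancel,
      mul_comm (S.card + 1) S.card,
      Nat.mul_div_cancel' (Nat.even_mul_succ_self S.card).two_dvd]
  have hn : 2 * (pairs S).card + 2 * S.card ≤ S.card * (S.card + 1) := by omega
  have hr := (Nat.cast_le (α := ℝ)).mpr hn
  push_cast at hr
  nlinarith [hr]

lemma edge_count_le {n : ℕ} (χ : Flag n → Bool) (S : Finset (Fin n)) :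
    Nat.card (SimpleGraph.induce (↑S : Set (Fin n)) (graphOfFlags χ)).edgeSet
      ≤ ((pairs S).filter fun e => χ e = true).card := by
  classical
  set G := graphOfFlags χ with hG
  set E := (SimpleGraph.induce (↑S : Set (Fin n)) G).edgeSet with hE
  set T := (pairs S).filter (fun e => χ e = true) with hT
  have hd : ∀ z : Sym2 (↑S : Set (Fin n)), z ∈ E → ¬ (Sym2.map Subtype.val z).IsDiag := by
    intro z
    induction z using Sym2.ind with
    | _ a b =>
      intro hz
      rw [hE, SimpleGraph.mem_edgeSet] at hz
      rw [hG] at hz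
      rw [Sym2.map_pair_eq, Sym2.mk_isDiag_iff]
      exact hz.1
  have hmem : ∀ z : Sym2 (↑S : Set (Fin n)), z ∈ E →
      ∀ h : ¬ (Sym2.map Subtype.val z).IsDiag, (⟨Sym2.map Subtype.val z, h⟩ : Flag n) ∈ T := by
    intro z
    induction z using Sym2.ind with
    | _ a b =>
      intro hz h
      rw [hE, SimpleGraph.mem_edgeSet] at hz
      rw [hG] at hz
      rw [hT, Finset.mem_filter]
      constructor
      · rw [pairs, Finset.mem_filter]
        refine ⟨Finset.mem_univ _, ?_⟩
        intro v hv
        have : v ∈ Sym2.map Subtype.val s(a, b) := hv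
        rw [Sym2.map_pair_eq, Sym2.mem_iff] at this
        rcases this with h1 | h1
        · exact h1 ▸ a.2
        · exact h1 ▸ b.2
      · have hne : (a : Fin n) ≠ b := hz.1
        have := hz.2
        have harg : ¬ (s((a : Fin n), (b : Fin n)) : Sym2 (Fin n)).IsDiag := by
          rw [Sym2.mk_isDiag_iff]; exact hne
        have hval : χ ⟨s((a : Fin n), (b : Fin n)), harg⟩ = true := this harg
        have heq : (⟨Sym2.map Subtype.val s(a, b), h⟩ : Flag n)
            = ⟨s((a : Fin n), (b : Fin n)), harg⟩ := by
          apply Subtype.ext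
          exact Sym2.map_pair_eq _ _ _
        rw [heq]
        exact hval
  have hcard : Nat.card E ≤ Nat.card {e : Flag n // e ∈ T} := by
    apply Nat.card_le_card_of_injective
      (f := fun z : E => (⟨⟨Sym2.map Subtype.val z.1, hd z.1 z.2⟩, hmem z.1 z.2 _⟩ :
        {e : Flag n // e ∈ T}))
    intro z₁ z₂ h12
    have := congrArg (fun w : {e : Flag n // e ∈ T} => (w.1 : Sym2 (Fin n))) h12
    simp only at this
    exact Subtype.ext (Sym2.map.injective Subtype.val_injective this)
  calc Nat.card E ≤ Nat.card {e : Flag n // e ∈ T} := hcard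
    _ = T.card := Nat.card_eq_finsetCard T

lemma pow_div_factorial_le_exp (k : ℕ) (x : ℝ) (hx : 0 ≤ x) :
    x ^ k / (k.factorial : ℝ) ≤ Real.exp x := by
  have h := Real.sum_le_exp_of_nonneg hx (k + 1)
  have hterm : x ^ k / (k.factorial : ℝ)
      ≤ ∑ i ∈ Finset.range (k + 1), x ^ i / (i.factorial : ℝ) := by
    exact Finset.single_le_sum (f := fun i => x ^ i / (i.factorial : ℝ))
      (fun i _ => by positivity) (Finset.self_mem_range_succ k)
  exact hterm.trans h

lemma one_div_factorial_le (k : ℕ) (hk : 1 ≤ k) :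
    (1 : ℝ) / (k.factorial : ℝ) ≤ (Real.exp 1 / k) ^ k := by
  have hkpos : (0:ℝ) < k := by exact_mod_cast hk
  have h := pow_div_factorial_le_exp k (k : ℝ) (le_of_lt hkpos)
  have hek : Real.exp (k : ℝ) = (Real.exp 1) ^ k := by
    rw [← Real.exp_nat_mul]; norm_num
  have hfac : (0:ℝ) < (k.factorial : ℝ) := by exact_mod_cast k.factorial_pos
  have hkk : (0:ℝ) < (k:ℝ) ^ k := by positivity
  rw [div_pow, ← hek, div_le_div_iff₀ hfac hkk]
  rw [div_le_iff₀ hfac] at h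
  nlinarith

lemma self_le_exp_div_e (x : ℝ) (hx : 0 ≤ x) : x ≤ Real.exp (x / Real.exp 1) := by
  have h := Real.add_one_le_exp (x / Real.exp 1 - 1)
  have he : Real.exp (x / Real.exp 1 - 1) = Real.exp (x / Real.exp 1) / Real.exp 1 :=
    Real.exp_sub _ _
  rw [he] at h
  have hepos := Real.exp_pos 1
  have := mul_le_mul_of_nonneg_right h (le_of_lt hepos)
  calc x = (x / Real.exp 1 - 1 + 1) * Real.exp 1 := by field_simp; ring
    _ ≤ Real.exp (x / Real.exp 1) / Real.exp 1 * Real.exp 1 := this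
    _ = Real.exp (x / Real.exp 1) := by field_simp

lemma div_pow_le_exp (N j : ℕ) : ((N : ℝ) / j) ^ j ≤ Real.exp ((N : ℝ) / Real.exp 1) := by
  rcases Nat.eq_zero_or_pos j with hj | hj
  · subst hj; simp [Real.exp_nonneg]
    positivity
  · have hjpos : (0:ℝ) < j := by exact_mod_cast hj
    have h1 : (N : ℝ) / j ≤ Real.exp ((N : ℝ) / j / Real.exp 1) :=
      self_le_exp_div_e _ (by positivity)
    calc ((N : ℝ) / j) ^ j ≤ (Real.exp ((N : ℝ) / j / Real.exp 1)) ^ j :=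
          pow_le_pow_left₀ (by positivity) h1 j
      _ = Real.exp ((j : ℝ) * ((N : ℝ) / j / Real.exp 1)) := by rw [← Real.exp_nat_mul]
      _ = Real.exp ((N : ℝ) / Real.exp 1) := by
          congr 1; field_simp

lemma exp_one_ub : Real.exp 1 ≤ 2.7182818286 := le_of_lt Real.exp_one_lt_d9
lemma exp_one_lb : (2.7182818283:ℝ) ≤ Real.exp 1 := le_of_lt Real.exp_one_gt_d9

lemma exp_point_one_ub : Real.exp 0.1 ≤ 10/9 := by
  have h := Real.add_one_le_exp (-0.1 : ℝ)
  have h2 : Real.exp (-0.1 : ℝ) = (Real.exp 0.1)⁻¹ := Real.exp_neg 0.1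
  have h3 : (0.9 : ℝ) ≤ (Real.exp 0.1)⁻¹ := by rw [← h2]; linarith
  have h4 := Real.exp_pos (0.1:ℝ)
  rw [le_inv_comm₀ (by norm_num) h4] at h3
  linarith [h3]

lemma exp_one_point_one_ub : Real.exp 1.1 ≤ 3.0204 := by
  have : Real.exp (1.1:ℝ) = Real.exp 1 * Real.exp 0.1 := by
    rw [← Real.exp_add]; norm_num
  rw [this]
  nlinarith [exp_one_ub, exp_point_one_ub, Real.exp_pos (0.1:ℝ), Real.exp_pos (1:ℝ)]

lemma choose_le_exp_min (n s : ℕ) (hs : s ≤ n) :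
    (n.choose s : ℝ) ≤ Real.exp ((n:ℝ) / Real.exp 1 + (min s (n - s) : ℕ)) := by
  set j := min s (n - s) with hj
  have hcho : n.choose s = n.choose j := by
    rcases le_total s (n - s) with h | h
    · rw [hj, min_eq_left h]
    · rw [hj, min_eq_right h, ← Nat.choose_symm hs]
  have h1 : (n.choose j : ℝ) ≤ (n:ℝ)^j / (j.factorial : ℝ) := Nat.choose_le_pow_div j n
  have key : (n:ℝ)^j / (j.factorial : ℝ) ≤ Real.exp ((n:ℝ)/Real.exp 1 + j) := by
    rcases Nat.eq_zero_or_pos j with h0 | h1'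
    · rw [h0]
      have h00 : (1:ℝ) ≤ Real.exp ((n:ℝ)/Real.exp 1 + ((0:ℕ):ℝ)) := by
        rw [Nat.cast_zero, add_zero]
        exact Real.one_le_exp (by positivity)
      simpa using h00
    · have hjr : (0:ℝ) < j := by exact_mod_cast h1'
      calc (n:ℝ)^j / (j.factorial : ℝ) = (n:ℝ)^j * (1 / (j.factorial : ℝ)) := by ring
        _ ≤ (n:ℝ)^j * (Real.exp 1 / j)^j := by
            apply mul_le_mul_of_nonneg_left (one_div_factorial_le j h1') (by positivity)
        _ = ((n:ℝ)/j)^j * (Real.exp 1)^j := by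
            rw [div_pow, div_pow]; ring
        _ ≤ Real.exp ((n:ℝ)/Real.exp 1) * (Real.exp 1)^j := by
            apply mul_le_mul_of_nonneg_right (div_pow_le_exp n j) (by positivity)
        _ = Real.exp ((n:ℝ)/Real.exp 1 + j) := by
            rw [← Real.exp_nat_mul, ← Real.exp_add]; norm_num
  rw [hcho]
  exact h1.trans key

lemma termB_bound (n s : ℕ) (x : ℝ) (hn : 1 ≤ n) (hns : n < 3*s) (hsn : s ≤ n)
    (hx0 : 0 ≤ x) (hx : x * n ≤ 2.88) :
    (n.choose s : ℝ) * Real.exp (-(1.1*(3*(s:ℝ)+1)) + x * ((s:ℝ)^2/2) * (Real.exp 1.1 - 1))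
      ≤ Real.exp (-(0.0227 * n)) := by
  have hnr : (0:ℝ) < n := by exact_mod_cast hn
  have hsr : (0:ℝ) < s := by
    have : 1 ≤ s := by omega
    exact_mod_cast this
  have hns' : (n:ℝ) < 3*s := by exact_mod_cast hns
  have hsn' : (s:ℝ) ≤ n := by exact_mod_cast hsn
  have hE : Real.exp 1.1 - 1 ≤ 2.0204 := by linarith [exp_one_point_one_ub]
  have hE0 : 0 ≤ Real.exp 1.1 - 1 := by
    have := Real.one_le_exp (by norm_num : (0:ℝ) ≤ 1.1); linarith
  have hxn : x ≤ 2.88 / n := by rw [le_div_iff₀ hnr]; linarith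
  have harg : x * ((s:ℝ)^2/2) * (Real.exp 1.1 - 1) ≤ 1.0102 * 2.88 * (s:ℝ)^2 / n := by
    have h1 : x * ((s:ℝ)^2/2) * (Real.exp 1.1 - 1) ≤ (2.88/n) * ((s:ℝ)^2/2) * 2.0204 := by
      apply mul_le_mul
      · apply mul_le_mul_of_nonneg_right hxn (by positivity)
      · exact hE
      · exact hE0
      · positivity
    calc x * ((s:ℝ)^2/2) * (Real.exp 1.1 - 1) ≤ (2.88/n) * ((s:ℝ)^2/2) * 2.0204 := h1
      _ = 1.0102 * 2.88 * (s:ℝ)^2 / n := by ring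
  have hchoose := choose_le_exp_min n s hsn
  have hj1 : ((min s (n - s) : ℕ) : ℝ) ≤ (s:ℝ) := by exact_mod_cast Nat.min_le_left _ _
  have hj2 : ((min s (n - s) : ℕ) : ℝ) ≤ (n:ℝ) - s := by
    calc ((min s (n - s) : ℕ) : ℝ) ≤ ((n - s : ℕ):ℝ) := by exact_mod_cast Nat.min_le_right _ _
      _ = (n:ℝ) - s := Nat.cast_sub hsn
  have hmain : (n:ℝ)/Real.exp 1 + ((min s (n - s) : ℕ) : ℝ)
      + (-(1.1*(3*(s:ℝ)+1)) + x * ((s:ℝ)^2/2) * (Real.exp 1.1 - 1)) ≤ -(0.0227 * n) := by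
    have hinv : (n:ℝ)/Real.exp 1 ≤ 0.36788 * n := by
      rw [div_le_iff₀ (Real.exp_pos 1)]
      nlinarith [exp_one_lb]
    rcases le_or_gt (2*s) n with h2s | h2s
    · have h2s' : 2*(s:ℝ) ≤ n := by exact_mod_cast h2s
      have hsq : (s:ℝ)^2 / n ≤ (5*(s:ℝ) - n)/6 := by
        rw [div_le_div_iff₀ hnr (by norm_num)]
        nlinarith [mul_nonneg (by linarith : (0:ℝ) ≤ 3*(s:ℝ) - n) (by linarith : (0:ℝ) ≤ (n:ℝ) - 2*s)]
      have harg2 : x * ((s:ℝ)^2/2) * (Real.exp 1.1 - 1) ≤ 1.0102 * 2.88 * ((5*(s:ℝ) - n)/6) := by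
        calc x * ((s:ℝ)^2/2) * (Real.exp 1.1 - 1) ≤ 1.0102 * 2.88 * (s:ℝ)^2 / n := harg
          _ = 1.0102 * 2.88 * ((s:ℝ)^2 / n) := by ring
          _ ≤ 1.0102 * 2.88 * ((5*(s:ℝ) - n)/6) := by nlinarith [hsq]
      linarith [hj1, harg2, hinv]
    · have h2s' : (n:ℝ) < 2*s := by exact_mod_cast h2s
      have hsq : (s:ℝ)^2 / n ≤ (3*(s:ℝ) - n)/2 := by
        rw [div_le_div_iff₀ hnr (by norm_num)]
        nlinarith [mul_nonneg (by linarith : (0:ℝ) ≤ 2*(s:ℝ) - n) (by linarith : (0:ℝ) ≤ (n:ℝ) - s)]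
      have harg2 : x * ((s:ℝ)^2/2) * (Real.exp 1.1 - 1) ≤ 1.0102 * 2.88 * ((3*(s:ℝ) - n)/2) := by
        calc x * ((s:ℝ)^2/2) * (Real.exp 1.1 - 1) ≤ 1.0102 * 2.88 * (s:ℝ)^2 / n := harg
          _ = 1.0102 * 2.88 * ((s:ℝ)^2 / n) := by ring
          _ ≤ 1.0102 * 2.88 * ((3*(s:ℝ) - n)/2) := by nlinarith [hsq]
      linarith [hj2, harg2, hinv]
  calc (n.choose s : ℝ) * Real.exp (-(1.1*(3*(s:ℝ)+1)) + x * ((s:ℝ)^2/2) * (Real.exp 1.1 - 1))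
      ≤ Real.exp ((n:ℝ)/Real.exp 1 + ((min s (n - s) : ℕ) : ℝ)) *
          Real.exp (-(1.1*(3*(s:ℝ)+1)) + x * ((s:ℝ)^2/2) * (Real.exp 1.1 - 1)) := by
        apply mul_le_mul_of_nonneg_right hchoose (Real.exp_nonneg _)
    _ = Real.exp ((n:ℝ)/Real.exp 1 + ((min s (n - s) : ℕ) : ℝ)
          + (-(1.1*(3*(s:ℝ)+1)) + x * ((s:ℝ)^2/2) * (Real.exp 1.1 - 1))) := by
        rw [← Real.exp_add]
    _ ≤ Real.exp (-(0.0227 * n)) := Real.exp_le_exp.mpr hmain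


lemma termA_bound (n s : ℕ) (x : ℝ) (hs : 1 ≤ s) (h3s : 3*s ≤ n)
    (hx0 : 0 ≤ x) (hx : x * n ≤ 2.88) :
    (n.choose s : ℝ) * (((s:ℝ)^2/2)^(3*s+1) / (((3*s+1).factorial : ℕ) : ℝ) * x^(3*s+1))
      ≤ 1.4 / n * ((s:ℝ) * (0.68 : ℝ)^s) := by
  have hsr : (0:ℝ) < s := by exact_mod_cast hs
  have hnr : (0:ℝ) < n := by
    have : 1 ≤ n := by omega
    exact_mod_cast this
  have h3sr : 3*(s:ℝ) ≤ n := by exact_mod_cast h3s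
  have hxn : x ≤ 2.88 / n := by rw [le_div_iff₀ hnr]; linarith
  set E := Real.exp 1 with hE
  have hE0 : (0:ℝ) < E := Real.exp_pos 1
  have hEub : E ≤ 2.7182818286 := exp_one_ub
  set k := 3*s+1 with hk
  set ρ : ℝ := E * s * x / 6 with hρ
  have hρ0 : 0 ≤ ρ := by positivity
  have hρle : ρ ≤ 1.305 * (s / n) := by
    rw [hρ]
    calc E * s * x / 6 ≤ 2.7182818286 * s * (2.88/n) / 6 := by
          apply div_le_div_of_nonneg_right ?_ (by norm_num)
          apply mul_le_mul ?_ hxn hx0 (by positivity)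
          exact mul_le_mul_of_nonneg_right hEub (le_of_lt hsr)
      _ = (2.7182818286 * 2.88 / 6) * ((s:ℝ)/n) := by ring
      _ ≤ 1.305 * ((s:ℝ) / n) := by
          apply mul_le_mul_of_nonneg_right (by norm_num) (by positivity)
  have hsn3 : (s:ℝ)/n ≤ 1/3 := by
    rw [div_le_iff₀ hnr]; linarith
  have hρ43 : ρ ≤ 0.435 := by nlinarith
  have h1 : (n.choose s : ℝ) ≤ (E * n / s) ^ s := by
    calc (n.choose s : ℝ) ≤ (n:ℝ)^s / (s.factorial : ℝ) := Nat.choose_le_pow_div s n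
      _ = (n:ℝ)^s * (1 / (s.factorial : ℝ)) := by ring
      _ ≤ (n:ℝ)^s * (E / s)^s :=
          mul_le_mul_of_nonneg_left (one_div_factorial_le s hs) (by positivity)
      _ = (E * n / s) ^ s := by rw [div_pow, div_pow, mul_pow]; ring
  have h2 : ((s:ℝ)^2/2)^k / ((k.factorial : ℕ) : ℝ) * x^k ≤ ρ ^ k := by
    have hfk : (1:ℝ) / (k.factorial : ℝ) ≤ (E / k)^k := one_div_factorial_le k (by omega)
    have hEk : (E / (k:ℝ)) ≤ E / (3*(s:ℝ)) := by
      apply div_le_div_of_nonneg_left (le_of_lt hE0) (by positivity)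
      rw [hk]; push_cast; linarith
    have hcomb : ((s:ℝ)^2/2) * x * (E / (3*(s:ℝ))) = ρ := by
      rw [hρ]; field_simp; ring
    calc ((s:ℝ)^2/2)^k / ((k.factorial : ℕ) : ℝ) * x^k
        = (((s:ℝ)^2/2) * x)^k * (1 / (k.factorial : ℝ)) := by rw [mul_pow]; ring
      _ ≤ (((s:ℝ)^2/2) * x)^k * (E / k)^k :=
          mul_le_mul_of_nonneg_left hfk (by positivity)
      _ = (((s:ℝ)^2/2) * x * (E / k))^k := by ring
      _ ≤ (((s:ℝ)^2/2) * x * (E / (3*(s:ℝ))))^k := by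
          apply pow_le_pow_left₀ (by positivity)
          apply mul_le_mul_of_nonneg_left hEk (by positivity)
      _ = ρ ^ k := by rw [hcomb]
  have hT : (n.choose s : ℝ) * (((s:ℝ)^2/2)^k / ((k.factorial : ℕ) : ℝ) * x^k)
      ≤ (E * n / s)^s * ρ^k :=
    mul_le_mul h1 h2 (by positivity) (by positivity)
  have hsplit : (E * n / s)^s * ρ^k = ((E * n / s) * ρ^3)^s * ρ := by
    rw [hk, pow_succ, pow_mul]
    ring
  have hbase : (E * n / s) * ρ^3 ≤ 0.68 := by
    have hb1 : ρ^3 ≤ (1.305*((s:ℝ)/n))^3 := pow_le_pow_left₀ hρ0 hρle 3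
    have hb2 : (E*n/s) * ρ^3 ≤ (E*n/s) * (1.305*((s:ℝ)/n))^3 :=
      mul_le_mul_of_nonneg_left hb1 (by positivity)
    have hb3 : (E*(n:ℝ)/s) * (1.305*((s:ℝ)/n))^3 = E * 1.305^3 * ((s:ℝ)/n)^2 := by
      field_simp
    have hb4 : E * 1.305^3 * ((s:ℝ)/n)^2 ≤ 0.68 := by
      have hq : ((s:ℝ)/n)^2 ≤ (1/3)^2 := pow_le_pow_left₀ (by positivity) hsn3 2
      nlinarith
    linarith [hb2, hb3 ▸ hb2]
  calc (n.choose s : ℝ) * (((s:ℝ)^2/2)^k / ((k.factorial : ℕ) : ℝ) * x^k)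
      ≤ (E * n / s)^s * ρ^k := hT
    _ = ((E * n / s) * ρ^3)^s * ρ := hsplit
    _ ≤ (0.68:ℝ)^s * (1.305*((s:ℝ)/n)) :=
        mul_le_mul (pow_le_pow_left₀ (by positivity) hbase s) hρle hρ0 (by positivity)
    _ ≤ 1.4 / n * ((s:ℝ) * (0.68:ℝ)^s) := by
        have he : (0.68:ℝ)^s * (1.305*((s:ℝ)/n)) = 1.305/n * ((s:ℝ) * (0.68:ℝ)^s) := by
          ring
        rw [he]
        apply mul_le_mul_of_nonneg_right ?_ (by positivity)
        gcongr
        norm_num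

noncomputable def w (n : ℕ) (x : ℝ) (s : ℕ) : ℝ :=
  if 3 * s ≤ n then ((s:ℝ)^2/2)^(3*s+1) / (((3*s+1).factorial : ℕ) : ℝ) * x^(3*s+1)
  else Real.exp (-(1.1*(3*(s:ℝ)+1)) + x * ((s:ℝ)^2/2) * (Real.exp 1.1 - 1))

lemma w_nonneg (n : ℕ) (x : ℝ) (hx : 0 ≤ x) (s : ℕ) : 0 ≤ w n x s := by
  rw [w]
  split_ifs
  · positivity
  · positivity

lemma geom_sum_bound (n : ℕ) :
    ∑ s ∈ Finset.range (n+1), (s:ℝ) * (0.68:ℝ)^s ≤ 6.65 := by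
  have hr : ‖(0.68:ℝ)‖ < 1 := by rw [Real.norm_eq_abs]; rw [abs_of_nonneg] <;> norm_num
  have hs := hasSum_coe_mul_geometric_of_norm_lt_one (r := (0.68:ℝ)) hr
  have hb := sum_le_hasSum (Finset.range (n+1)) (fun i _ => by positivity) hs
  calc ∑ s ∈ Finset.range (n+1), (s:ℝ) * (0.68:ℝ)^s ≤ 0.68 / (1 - 0.68)^2 := hb
    _ ≤ 6.65 := by norm_num

lemma sq_le_exp (y : ℝ) (hy : 0 ≤ y) : y^2/2 ≤ Real.exp y := by
  have h := Real.sum_le_exp_of_nonneg hy 3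
  have : ∑ i ∈ Finset.range 3, y ^ i / (i.factorial : ℝ) = 1 + y + y^2/2 := by
    simp [Finset.sum_range_succ, Nat.factorial]
    try ring
  rw [this] at h
  linarith

lemma chern_tail (n : ℕ) (hn : 1 ≤ n) :
    ((n:ℝ)+1) * Real.exp (-(0.0227*n)) ≤ 7800/n := by
  have hnr : (0:ℝ) < n := by exact_mod_cast hn
  have h1 : (0.0227*(n:ℝ))^2/2 ≤ Real.exp (0.0227*n) := sq_le_exp _ (by positivity)
  have h2 : Real.exp (-(0.0227*(n:ℝ))) = (Real.exp (0.0227*n))⁻¹ := Real.exp_neg _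
  have h3 : Real.exp (-(0.0227*(n:ℝ))) ≤ 2/(0.0227*n)^2 := by
    rw [h2, show (2:ℝ)/(0.0227*(n:ℝ))^2 = ((0.0227*(n:ℝ))^2/2)⁻¹ by rw [inv_div]]
    exact inv_anti₀ (by positivity) h1
  have hnr1 : (1:ℝ) ≤ n := by exact_mod_cast hn
  calc ((n:ℝ)+1) * Real.exp (-(0.0227*n)) ≤ 2*n * (2/(0.0227*n)^2) := by
        apply mul_le_mul (by linarith) h3 (Real.exp_nonneg _) (by positivity)
    _ = 4/(0.0227^2 * n) := by field_simp; ring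
    _ ≤ 7800/n := by
        rw [div_le_div_iff₀ (by positivity) hnr]
        nlinarith
  
lemma total_bound (n : ℕ) (hn : 1 ≤ n) (x : ℝ) (hx0 : 0 ≤ x) (hxn : x * n ≤ 2.88) :
    ∑ s ∈ Finset.range (n+1), (n.choose s : ℝ) * w n x s ≤ 10000 / n := by
  have hnr : (0:ℝ) < n := by exact_mod_cast hn
  rw [← Finset.sum_filter_add_sum_filter_not (Finset.range (n+1)) (fun s => 3*s ≤ n)]
  have hA : ∑ s ∈ (Finset.range (n+1)).filter (fun s => 3*s ≤ n), (n.choose s : ℝ) * w n x s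
      ≤ 9.4 / n := by
    have hterm : ∀ s ∈ (Finset.range (n+1)).filter (fun s => 3*s ≤ n),
        (n.choose s : ℝ) * w n x s ≤ 1.4/n * ((s:ℝ) * (0.68:ℝ)^s) := by
      intro s hsmem
      rw [Finset.mem_filter] at hsmem
      rw [w, if_pos hsmem.2]
      rcases Nat.eq_zero_or_pos s with h0 | h1
      · subst h0
        simp
      · exact termA_bound n s x h1 hsmem.2 hx0 hxn
    calc _ ≤ ∑ s ∈ (Finset.range (n+1)).filter (fun s => 3*s ≤ n),
          1.4/n * ((s:ℝ) * (0.68:ℝ)^s) := Finset.sum_le_sum hterm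
      _ ≤ ∑ s ∈ Finset.range (n+1), 1.4/n * ((s:ℝ) * (0.68:ℝ)^s) := by
          apply Finset.sum_le_sum_of_subset_of_nonneg (Finset.filter_subset _ _)
          intro s _ _; positivity
      _ = 1.4/n * ∑ s ∈ Finset.range (n+1), (s:ℝ) * (0.68:ℝ)^s := by
          rw [Finset.mul_sum]
      _ ≤ 1.4/n * 6.65 := by
          apply mul_le_mul_of_nonneg_left (geom_sum_bound n) (by positivity)
      _ ≤ 9.4 / n := by
          rw [div_mul_eq_mul_div, div_le_div_iff₀ hnr hnr]
          nlinarith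
  have hB : ∑ s ∈ (Finset.range (n+1)).filter (fun s => ¬ 3*s ≤ n), (n.choose s : ℝ) * w n x s
      ≤ 7800 / n := by
    have hterm : ∀ s ∈ (Finset.range (n+1)).filter (fun s => ¬ 3*s ≤ n),
        (n.choose s : ℝ) * w n x s ≤ Real.exp (-(0.0227*n)) := by
      intro s hsmem
      rw [Finset.mem_filter, Finset.mem_range] at hsmem
      rw [w, if_neg hsmem.2]
      exact termB_bound n s x hn (by omega) (by omega) hx0 hxn
    calc _ ≤ ∑ _s ∈ (Finset.range (n+1)).filter (fun s => ¬ 3*s ≤ n),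
          Real.exp (-(0.0227*(n:ℝ))) := Finset.sum_le_sum hterm
      _ = ((Finset.range (n+1)).filter (fun s => ¬ 3*s ≤ n)).card * Real.exp (-(0.0227*(n:ℝ))) := by
          rw [Finset.sum_const, nsmul_eq_mul]
      _ ≤ ((n:ℝ)+1) * Real.exp (-(0.0227*(n:ℝ))) := by
          apply mul_le_mul_of_nonneg_right ?_ (Real.exp_nonneg _)
          have := Finset.card_filter_le (Finset.range (n+1)) (fun s => ¬ 3*s ≤ n)
          rw [Finset.card_range] at this
          exact_mod_cast this
      _ ≤ 7800 / n := chern_tail n hn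
  calc _ ≤ 9.4/(n:ℝ) + 7800/n := add_le_add hA hB
    _ ≤ 10000 / n := by
      rw [← add_div, div_le_div_iff₀ hnr hnr]
      nlinarith

lemma badS_bound (n : ℕ) (q : ℝ≥0∞) (hq : q ≤ 1) (S : Finset (Fin n)) :
    cube (Flag n) q hq {χ : Flag n → Bool |
        3*S.card+1 ≤ ((pairs S).filter fun e => χ e = true).card}
      ≤ ENNReal.ofReal (w n q.toReal S.card) := by
  classical
  have hm : ((pairs S).card:ℝ) ≤ ((S.card:ℝ)^2 - S.card)/2 := pairs_card S
  have hs0 : (0:ℝ) ≤ S.card := by positivity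
  have hm2 : ((pairs S).card:ℝ) ≤ (S.card:ℝ)^2/2 := by linarith
  have hx0 : 0 ≤ q.toReal := ENNReal.toReal_nonneg
  rw [w]
  split_ifs with h3
  · refine (cube_count_ge_le_choose' q hq (pairs S) (3*S.card+1)).trans
      (ENNReal.ofReal_le_ofReal ?_)
    have h1 : ((pairs S).card.choose (3*S.card+1) : ℝ)
        ≤ ((pairs S).card:ℝ)^(3*S.card+1) / ((3*S.card+1).factorial : ℝ) :=
      Nat.choose_le_pow_div _ _
    have h2 : ((pairs S).card:ℝ)^(3*S.card+1) ≤ ((S.card:ℝ)^2/2)^(3*S.card+1) :=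
      pow_le_pow_left₀ (by positivity) hm2 _
    apply mul_le_mul ?_ le_rfl (by positivity) (by positivity)
    calc ((pairs S).card.choose (3*S.card+1) : ℝ)
        ≤ ((pairs S).card:ℝ)^(3*S.card+1) / ((3*S.card+1).factorial : ℝ) := h1
      _ ≤ ((S.card:ℝ)^2/2)^(3*S.card+1) / ((3*S.card+1).factorial : ℝ) := by gcongr
  · refine (cube_count_ge_le_exp q hq (pairs S) (3*S.card+1) 1.1 (by norm_num)).trans
      (ENNReal.ofReal_le_ofReal ?_)
    apply Real.exp_le_exp.mpr
    have hE0 : 0 ≤ Real.exp 1.1 - 1 := by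
      have := Real.one_le_exp (by norm_num : (0:ℝ) ≤ 1.1); linarith
    have hcast : ((3*S.card+1 : ℕ):ℝ) = 3*(S.card:ℝ)+1 := by push_cast; ring
    rw [hcast]
    have : q.toReal * ((pairs S).card:ℝ) * (Real.exp 1.1 - 1)
        ≤ q.toReal * ((S.card:ℝ)^2/2) * (Real.exp 1.1 - 1) := by
      apply mul_le_mul_of_nonneg_right ?_ hE0
      exact mul_le_mul_of_nonneg_left hm2 hx0
    linarith

lemma fail_bound (n : ℕ) (q : ℝ≥0∞) (hq : q ≤ 1) :
    cube (Flag n) q hq {χ : Flag n → Bool |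
      ¬ ∀ S : Finset (Fin n), S.Nonempty →
          Nat.card (SimpleGraph.induce (↑S : Set (Fin n)) (graphOfFlags χ)).edgeSet ≤ 3 * S.card}
      ≤ ENNReal.ofReal (∑ s ∈ Finset.range (n+1), (n.choose s : ℝ) * w n q.toReal s) := by
  classical
  have hsub : {χ : Flag n → Bool |
      ¬ ∀ S : Finset (Fin n), S.Nonempty →
          Nat.card (SimpleGraph.induce (↑S : Set (Fin n)) (graphOfFlags χ)).edgeSet ≤ 3 * S.card}
      ⊆ ⋃ S ∈ (Finset.univ : Finset (Fin n)).powerset,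
        {χ : Flag n → Bool | 3*S.card+1 ≤ ((pairs S).filter fun e => χ e = true).card} := by
    intro χ hχ
    simp only [Set.mem_setOf_eq] at hχ
    push_neg at hχ
    obtain ⟨S, _, hS2⟩ := hχ
    refine Set.mem_biUnion (Finset.mem_powerset.mpr (Finset.subset_univ S)) ?_
    have := edge_count_le χ S
    simp only [Set.mem_setOf_eq]
    omega
  calc cube (Flag n) q hq _ ≤ _ := measure_mono hsub
    _ ≤ ∑ S ∈ (Finset.univ : Finset (Fin n)).powerset,
          cube (Flag n) q hq
            {χ : Flag n → Bool | 3*S.card+1 ≤ ((pairs S).filter fun e => χ e = true).card} :=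
        measure_biUnion_finset_le _ _
    _ ≤ ∑ S ∈ (Finset.univ : Finset (Fin n)).powerset,
          ENNReal.ofReal (w n q.toReal S.card) :=
        Finset.sum_le_sum (fun S _ => badS_bound n q hq S)
    _ = ENNReal.ofReal (∑ S ∈ (Finset.univ : Finset (Fin n)).powerset, w n q.toReal S.card) :=
        (ENNReal.ofReal_sum_of_nonneg
          (fun S _ => w_nonneg n q.toReal ENNReal.toReal_nonneg S.card)).symm
    _ = ENNReal.ofReal (∑ s ∈ Finset.range (n+1), (n.choose s : ℝ) * w n q.toReal s) := by
        congr 1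
        rw [Finset.sum_powerset_apply_card (f := w n q.toReal)]
        simp only [Finset.card_univ, Fintype.card_fin, nsmul_eq_mul]

end ER13

/-- For fixed `ε ∈ (0, 1.88)` and `p = (1+ε)/n`, whp every subgraph of `G(n,p)` has average
degree at most `6`: every nonempty vertex subset `S` satisfies `|E(G[S])| ≤ 3|S|`. -/
theorem stmt13 (ε : ℝ) (hε : 0 < ε) (hε1 : ε < 1.88) :
    Tendsto
      (fun n : ℕ =>
        erdosRenyi n ((1 + ε) / n)
          {G : SimpleGraph (Fin n) |
            ∀ S : Finset (Fin n), S.Nonempty →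
              Nat.card (SimpleGraph.induce (↑S : Set (Fin n)) G).edgeSet ≤ 3 * S.card})
      atTop (nhds 1) := by
  classical
  set Event : (n : ℕ) → Set (SimpleGraph (Fin n)) := fun n =>
    {G : SimpleGraph (Fin n) |
      ∀ S : Finset (Fin n), S.Nonempty →
        Nat.card (SimpleGraph.induce (↑S : Set (Fin n)) G).edgeSet ≤ 3 * S.card} with hEvent
  have hmeas : ∀ n, Measurable (graphOfFlags (n := n)) := fun n _ _ => ER13.measurableSet_all _
  have hcube : ∀ n : ℕ, erdosRenyi n ((1+ε)/n) (Event n)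
      = ER13.cube (ER13.Flag n) ((min (Real.toNNReal ((1+ε)/n)) 1 : NNReal) : ℝ≥0∞)
          (ENNReal.coe_le_one_iff.mpr (min_le_right _ _))
          (graphOfFlags ⁻¹' (Event n)) := by
    intro n
    rw [erdosRenyi, Measure.map_apply (hmeas n) MeasurableSpace.measurableSet_top]
    rfl
  -- bounds
  have hlow : ∀ n : ℕ, 1 ≤ n →
      1 - ENNReal.ofReal (10000 / n) ≤ erdosRenyi n ((1+ε)/n) (Event n) := by
    intro n hn
    set q : ℝ≥0∞ := ((min (Real.toNNReal ((1+ε)/n)) 1 : NNReal) : ℝ≥0∞) with hqdef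
    have hq : q ≤ 1 := ENNReal.coe_le_one_iff.mpr (min_le_right _ _)
    have hnr : (0:ℝ) < n := by exact_mod_cast hn
    have hp0 : (0:ℝ) ≤ (1+ε)/n := by positivity
    have hx : q.toReal ≤ (1+ε)/n := by
      rw [hqdef, ENNReal.coe_toReal, NNReal.coe_min, Real.coe_toNNReal _ hp0]
      exact min_le_left _ _
    have hxn : q.toReal * n ≤ 2.88 := by
      have : q.toReal * n ≤ (1+ε)/n * n := by
        apply mul_le_mul_of_nonneg_right hx (le_of_lt hnr)
      rw [div_mul_cancel₀ _ (ne_of_gt hnr)] at this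
      linarith
    have hfail := (ER13.fail_bound n q hq).trans
      (ENNReal.ofReal_le_ofReal (ER13.total_bound n hn q.toReal ENNReal.toReal_nonneg hxn))
    have hcompl : ER13.cube (ER13.Flag n) q hq (graphOfFlags ⁻¹' (Event n))
        = 1 - ER13.cube (ER13.Flag n) q hq ((graphOfFlags ⁻¹' (Event n))ᶜ) := by
      conv_lhs => rw [← compl_compl (graphOfFlags ⁻¹' (Event n))]
      exact prob_compl_eq_one_sub (ER13.measurableSet_all _)
    have hcomplset : (graphOfFlags ⁻¹' (Event n))ᶜ = {χ : ER13.Flag n → Bool |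
        ¬ ∀ S : Finset (Fin n), S.Nonempty →
            Nat.card (SimpleGraph.induce (↑S : Set (Fin n)) (graphOfFlags χ)).edgeSet
              ≤ 3 * S.card} := by
      ext χ; simp [hEvent, Set.preimage, Set.mem_setOf_eq]
    rw [hcube n, hcompl]
    apply tsub_le_tsub_left
    rw [hcomplset] at *
    exact hfail
  have hup : ∀ n : ℕ, erdosRenyi n ((1+ε)/n) (Event n) ≤ 1 := by
    intro n
    rw [hcube n]
    exact prob_le_one
  -- limit
  have hofreal : Tendsto (fun n : ℕ => ENNReal.ofReal (10000 / n)) atTop (nhds 0) := by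
    have h0 := tendsto_const_div_atTop_nhds_zero_nat (10000:ℝ)
    have h2 := ENNReal.tendsto_ofReal h0
    simpa using h2
  have hg : Tendsto (fun n : ℕ => 1 - ENNReal.ofReal (10000 / n)) atTop (nhds 1) := by
    have := ENNReal.Tendsto.sub (tendsto_const_nhds (x := (1:ℝ≥0∞)) (f := atTop)) hofreal
      (Or.inl ENNReal.one_ne_top)
    simpa using this
  apply tendsto_of_tendsto_of_tendsto_of_le_of_le' hg tendsto_const_nhds
  · filter_upwards [eventually_ge_atTop 1] with n hn
    exact hlow n hn
  · filter_upwards with n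
    exact hup n
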